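/- arXiv:1912.08799 — 2 statements merged into one kernel-verified Lean document; each statement's English description precedes it below -/
import Mathlib

section
/- Proposition (variance): the variance of the GRL distribution satisfies ∫_{0}^{∞} t² · f(t) dt − μ² = (λ^(2/α)/(α²(λ−1)²)) · [2α(λ−1) · Γ(2/α) · (λ + 2/α − 1) − Γ(1/α)² · (λ + 1/α − 1)²], where μ = (λ^(1/α)/(α(λ−1))) · Γ(1/α) · (λ + 1/α − 1) and Γ denotes the Euler gamma function. -/
open Real MeasureTheory

lemma aux_integrable {p q b : ℝ} (hp : 0 < p) (hq : -1 < q) (hb : 0 < b) :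
    IntegrableOn (fun x : ℝ => x ^ q * Real.exp (-b * x ^ p)) (Set.Ioi 0) := by
  set s : ℝ := (q + 1) / p with hs_def
  have hs : 0 < s := div_pos (by linarith) hp
  -- integrability of y ^ (s-1) * exp (-(b*y)) on Ioi 0
  have h0 : IntegrableOn (fun y : ℝ => Real.exp (-y) * y ^ (s - 1)) (Set.Ioi 0) :=
    Real.GammaIntegral_convergent hs
  have h1 : IntegrableOn (fun y : ℝ => Real.exp (-(b * y)) * (b * y) ^ (s - 1))
      (Set.Ioi 0) := by
    have := (integrableOn_Ioi_comp_mul_left_iff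
      (fun y : ℝ => Real.exp (-y) * y ^ (s - 1)) 0 hb).mpr (by simpa using h0)
    simpa using this
  have h2 : IntegrableOn (fun y : ℝ => y ^ (s - 1) * Real.exp (-(b * y))) (Set.Ioi 0) := by
    have h2a : IntegrableOn (fun y : ℝ => (b ^ (s - 1))⁻¹ *
        (Real.exp (-(b * y)) * (b * y) ^ (s - 1))) (Set.Ioi 0) := h1.const_mul _
    refine h2a.congr_fun (fun y hy => ?_) measurableSet_Ioi
    have hy' : (0 : ℝ) < y := hy
    beta_reduce
    rw [Real.mul_rpow hb.le hy'.le]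
    field_simp [(Real.rpow_pos_of_pos hb (s - 1)).ne']
  have h3 := (integrableOn_Ioi_comp_rpow_iff'
    (fun y : ℝ => y ^ (s - 1) * Real.exp (-(b * y))) hp.ne').mpr h2
  refine h3.congr_fun (fun x hx => ?_) measurableSet_Ioi
  have hx' : (0 : ℝ) < x := hx
  simp only [smul_eq_mul]
  have hps : p * s = q + 1 := by rw [hs_def]; field_simp
  have hexp : p - 1 + p * (s - 1) = q := by linear_combination hps
  rw [← Real.rpow_mul hx'.le, ← mul_assoc, ← Real.rpow_add hx', hexp, neg_mul]

/-- The variance of the GRL distribution: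
σ² = (λ^(2/α)/(α²(λ-1)²)) [2α(λ-1) Γ(2/α) (λ + 2/α - 1) - Γ(1/α)² (λ + 1/α - 1)²],
where μ is the mean. -/
theorem grl_variance (lam α : ℝ) (hlam : 2 ≤ lam) (hα : 0 < α) (μ : ℝ)
    (hμ : μ = (lam ^ ((1 : ℝ) / α) / (α * (lam - 1))) * Real.Gamma (1 / α) *
      (lam + 1 / α - 1)) :
    (∫ t in Set.Ioi (0 : ℝ),
      t ^ 2 * ((α / (lam * (lam - 1))) * t ^ (α - 1) * (lam + t ^ α / lam - 2) *
        Real.exp (-(t ^ α / lam)))) - μ ^ 2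
      = (lam ^ ((2 : ℝ) / α) / (α ^ 2 * (lam - 1) ^ 2)) *
          (2 * α * (lam - 1) * Real.Gamma (2 / α) * (lam + 2 / α - 1)
            - Real.Gamma (1 / α) ^ 2 * (lam + 1 / α - 1) ^ 2) := by
  have hlam0 : (0 : ℝ) < lam := by linarith
  have hlam1 : (0 : ℝ) < lam - 1 := by linarith
  have hb : (0 : ℝ) < 1 / lam := by positivity
  set c : ℝ := α / (lam * (lam - 1)) with hc
  set b : ℝ := 1 / lam with hbdef
  -- the two basic integrals
  have hq1 : (-1 : ℝ) < α + 1 := by linarith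
  have hq2 : (-1 : ℝ) < 2 * α + 1 := by linarith
  have hI1 : ∫ t in Set.Ioi (0 : ℝ), t ^ (α + 1) * Real.exp (-b * t ^ α)
      = b ^ (-(α + 1 + 1) / α) * (1 / α) * Real.Gamma ((α + 1 + 1) / α) :=
    integral_rpow_mul_exp_neg_mul_rpow hα hq1 hb
  have hI2 : ∫ t in Set.Ioi (0 : ℝ), t ^ (2 * α + 1) * Real.exp (-b * t ^ α)
      = b ^ (-(2 * α + 1 + 1) / α) * (1 / α) * Real.Gamma ((2 * α + 1 + 1) / α) :=
    integral_rpow_mul_exp_neg_mul_rpow hα hq2 hb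
  have hint1 : IntegrableOn (fun t : ℝ => t ^ (α + 1) * Real.exp (-b * t ^ α))
      (Set.Ioi 0) := aux_integrable hα hq1 hb
  have hint2 : IntegrableOn (fun t : ℝ => t ^ (2 * α + 1) * Real.exp (-b * t ^ α))
      (Set.Ioi 0) := aux_integrable hα hq2 hb
  -- rewrite the integrand
  have hcongr : ∫ t in Set.Ioi (0 : ℝ),
      t ^ 2 * (c * t ^ (α - 1) * (lam + t ^ α / lam - 2) *
        Real.exp (-(t ^ α / lam)))
      = ∫ t in Set.Ioi (0 : ℝ),
        (c * (lam - 2)) * (t ^ (α + 1) * Real.exp (-b * t ^ α))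
          + (c / lam) * (t ^ (2 * α + 1) * Real.exp (-b * t ^ α)) := by
    refine setIntegral_congr_fun measurableSet_Ioi (fun t ht => ?_)
    have ht' : (0 : ℝ) < t := ht
    have h2 : (t : ℝ) ^ (2 : ℕ) = t ^ ((2 : ℝ)) := by
      rw [← Real.rpow_natCast t 2]; norm_num
    have hta : t ^ (α - 1) * t ^ ((2 : ℝ)) = t ^ (α + 1) := by
      rw [← Real.rpow_add ht']; ring_nf
    have htb : t ^ (α - 1) * t ^ ((2 : ℝ)) * t ^ α = t ^ (2 * α + 1) := by
      rw [← Real.rpow_add ht', ← Real.rpow_add ht']; ring_nf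
    have hexp : Real.exp (-(t ^ α / lam)) = Real.exp (-b * t ^ α) := by
      rw [hbdef]; ring_nf
    rw [h2, hexp]
    have expand : t ^ ((2 : ℝ)) * (c * t ^ (α - 1) * (lam + t ^ α / lam - 2) *
        Real.exp (-b * t ^ α))
        = (c * (lam - 2)) * ((t ^ (α - 1) * t ^ ((2 : ℝ))) * Real.exp (-b * t ^ α))
          + (c / lam) * ((t ^ (α - 1) * t ^ ((2 : ℝ)) * t ^ α) * Real.exp (-b * t ^ α)) := by
      field_simp
      ring
    rw [expand, htb, hta]
  rw [hcongr, integral_add ((hint1.const_mul _)) ((hint2.const_mul _)),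
    integral_const_mul, integral_const_mul, hI1, hI2]
  -- simplify rpow of b and Gamma values
  have hbpow : ∀ y : ℝ, b ^ y = lam ^ (-y) := by
    intro y
    rw [hbdef, one_div, ← Real.rpow_neg_one lam, ← Real.rpow_mul hlam0.le]
    ring_nf
  have hg1 : Real.Gamma ((α + 1 + 1) / α) = (2 / α) * Real.Gamma (2 / α) := by
    have : (α + 1 + 1) / α = 2 / α + 1 := by field_simp; ring
    rw [this, Real.Gamma_add_one (by positivity)]
  have hg2 : Real.Gamma ((2 * α + 1 + 1) / α)
      = (2 / α + 1) * ((2 / α) * Real.Gamma (2 / α)) := by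
    have h21 : (2 * α + 1 + 1) / α = (2 / α + 1) + 1 := by field_simp; ring
    have h22 : (2 : ℝ) / α + 1 = 2 / α + 1 := rfl
    rw [h21, Real.Gamma_add_one (by positivity), Real.Gamma_add_one (by positivity)]
  have hl1 : lam ^ (-(-(α + 1 + 1) / α)) = lam * lam ^ ((2 : ℝ) / α) := by
    have : -(-(α + 1 + 1) / α) = 1 + 2 / α := by field_simp; ring
    rw [this, Real.rpow_add hlam0, Real.rpow_one]
  have hl2 : lam ^ (-(-(2 * α + 1 + 1) / α)) = lam * lam * lam ^ ((2 : ℝ) / α) := by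
    have : -(-(2 * α + 1 + 1) / α) = 1 + 1 + 2 / α := by field_simp; ring
    rw [this, Real.rpow_add hlam0, Real.rpow_add hlam0, Real.rpow_one]
  have hmusq : μ ^ 2 = (lam ^ ((2 : ℝ) / α) / (α * (lam - 1)) ^ 2) *
      Real.Gamma (1 / α) ^ 2 * (lam + 1 / α - 1) ^ 2 := by
    rw [hμ]
    have : lam ^ ((1 : ℝ) / α) * lam ^ ((1 : ℝ) / α) = lam ^ ((2 : ℝ) / α) := by
      rw [← Real.rpow_add hlam0]; ring_nf
    rw [← this]
    generalize α * (lam - 1) = d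
    ring
  rw [hbpow, hbpow, hl1, hl2, hg1, hg2, hmusq, hc]
  have hα' : α ≠ 0 := hα.ne'
  field_simp
  ring
end

section
/- Proposition (central moments): for every natural number r, the r-th central moment of the GRL distribution satisfies M_r = ∫_{0}^{∞} (t − μ)^r · f(t) dt = Σ_{i=0}^{r} C(r, i) · (−μ)^(r−i) · m_i, where μ = (λ^(1/α)/(α(λ−1))) · Γ(1/α) · (λ + 1/α − 1), m_0 = 1, and m_i = (i·λ^(i/α)/(α(λ−1))) · (λ + i/α − 1) · Γ(i/α) for i ≥ 1, with C(r, i) the binomial coefficient and Γ the Euler gamma function. -/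
open Real MeasureTheory

/-- Integrability of `x ^ s * exp (-b * x ^ p)` on `Ioi 0` for any `p > 0`. -/
lemma grl_aux_integrable {p s b : ℝ} (hp : 0 < p) (hs : -1 < s) (hb : 0 < b) :
    IntegrableOn (fun x : ℝ => x ^ s * Real.exp (-b * x ^ p)) (Set.Ioi 0) := by
  have hq : (-1 : ℝ) < (s + 1) / p - 1 := by
    have : 0 < (s + 1) / p := div_pos (by linarith) hp
    linarith
  have hf : IntegrableOn (fun y : ℝ => y ^ ((s + 1) / p - 1) * Real.exp (-b * y))
      (Set.Ioi 0) := by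
    have := integrableOn_rpow_mul_exp_neg_mul_rpow hq one_pos hb
    simpa using this
  have := (integrableOn_Ioi_comp_rpow_iff'
      (fun y : ℝ => y ^ ((s + 1) / p - 1) * Real.exp (-b * y)) hp.ne').mpr hf
  refine this.congr_fun (fun x hx => ?_) measurableSet_Ioi
  have hx0 : (0 : ℝ) < x := hx
  simp only [smul_eq_mul]
  rw [← Real.rpow_mul hx0.le, ← mul_assoc, ← Real.rpow_add hx0,
    show p - 1 + p * ((s + 1) / p - 1) = s by field_simp; ring]

lemma grl_pointwise {lam α : ℝ} (hlam : 2 ≤ lam) (hα : 0 < α) (i : ℕ) {t : ℝ} (ht : 0 < t) :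
    (t : ℝ) ^ i * ((α / (lam * (lam - 1))) * t ^ (α - 1) * (lam + t ^ α / lam - 2) *
        Real.exp (-(t ^ α / lam)))
    = (α / (lam * (lam - 1)) * (lam - 2)) *
        (t ^ ((i : ℝ) + α - 1) * Real.exp (-lam⁻¹ * t ^ α))
      + (α / (lam * (lam - 1)) * lam⁻¹) *
        (t ^ ((i : ℝ) + 2 * α - 1) * Real.exp (-lam⁻¹ * t ^ α)) := by
  have hl0 : lam ≠ 0 := by linarith
  have h1 : t ^ ((i : ℝ) + α - 1) = t ^ (i : ℕ) * t ^ (α - 1) := by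
    rw [← Real.rpow_natCast t i, ← Real.rpow_add ht]
    congr 1; ring
  have h2 : t ^ ((i : ℝ) + 2 * α - 1) = t ^ (i : ℕ) * t ^ (α - 1) * t ^ α := by
    rw [← Real.rpow_natCast t i, ← Real.rpow_add ht, ← Real.rpow_add ht]
    congr 1; ring
  have he : -(t ^ α / lam) = -lam⁻¹ * t ^ α := by ring
  have hl1 : lam - 1 ≠ 0 := by intro h; linarith
  rw [h1, h2, he]
  field_simp
  ring

lemma grl_raw_integrable {lam α : ℝ} (hlam : 2 ≤ lam) (hα : 0 < α) (i : ℕ) :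
    IntegrableOn (fun t : ℝ => t ^ i * ((α / (lam * (lam - 1))) * t ^ (α - 1) *
      (lam + t ^ α / lam - 2) * Real.exp (-(t ^ α / lam)))) (Set.Ioi 0) := by
  have hb : (0 : ℝ) < lam⁻¹ := inv_pos.mpr (by linarith)
  have hs1 : (-1 : ℝ) < (i : ℝ) + α - 1 := by
    have : (0 : ℝ) ≤ (i : ℝ) := Nat.cast_nonneg i
    linarith
  have hs2 : (-1 : ℝ) < (i : ℝ) + 2 * α - 1 := by
    have : (0 : ℝ) ≤ (i : ℝ) := Nat.cast_nonneg i
    linarith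
  have h := ((grl_aux_integrable hα hs1 hb).const_mul
      (α / (lam * (lam - 1)) * (lam - 2))).add
    ((grl_aux_integrable hα hs2 hb).const_mul (α / (lam * (lam - 1)) * lam⁻¹))
  exact MeasureTheory.IntegrableOn.congr_fun h (fun t ht => (grl_pointwise hlam hα i ht).symm) measurableSet_Ioi

lemma grl_raw_moment {lam α : ℝ} (hlam : 2 ≤ lam) (hα : 0 < α) (i : ℕ) :
    ∫ t in Set.Ioi (0 : ℝ), t ^ i * ((α / (lam * (lam - 1))) * t ^ (α - 1) *
      (lam + t ^ α / lam - 2) * Real.exp (-(t ^ α / lam)))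
    = (if i = 0 then 1 else
        ((i : ℝ) * lam ^ ((i : ℝ) / α) / (α * (lam - 1))) * (lam + (i : ℝ) / α - 1) *
          Real.Gamma ((i : ℝ) / α)) := by
  have hl0 : lam ≠ 0 := by linarith
  have hl1 : lam - 1 ≠ 0 := by intro h; linarith
  have hlpos : (0 : ℝ) < lam := by linarith
  have hb : (0 : ℝ) < lam⁻¹ := inv_pos.mpr hlpos
  have hs1 : (-1 : ℝ) < (i : ℝ) + α - 1 := by
    have : (0 : ℝ) ≤ (i : ℝ) := Nat.cast_nonneg i
    linarith
  have hs2 : (-1 : ℝ) < (i : ℝ) + 2 * α - 1 := by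
    have : (0 : ℝ) ≤ (i : ℝ) := Nat.cast_nonneg i
    linarith
  rw [setIntegral_congr_fun measurableSet_Ioi
    (fun t (ht : t ∈ Set.Ioi (0:ℝ)) => grl_pointwise hlam hα i ht)]
  rw [integral_add ((grl_aux_integrable hα hs1 hb).const_mul _)
    ((grl_aux_integrable hα hs2 hb).const_mul _), integral_const_mul, integral_const_mul,
    integral_rpow_mul_exp_neg_mul_rpow hα hs1 hb,
    integral_rpow_mul_exp_neg_mul_rpow hα hs2 hb]
  have hbval : ∀ y : ℝ, (lam⁻¹ : ℝ) ^ (-y) = lam ^ y := by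
    intro y
    rw [← Real.rpow_neg_one lam, ← Real.rpow_mul hlpos.le]
    ring_nf
  have e1 : (((i : ℝ) + α - 1 + 1) / α) = (i : ℝ) / α + 1 := by field_simp; ring
  have e2 : (((i : ℝ) + 2 * α - 1 + 1) / α) = (i : ℝ) / α + 2 := by field_simp; ring
  rw [show (-((i : ℝ) + α - 1 + 1) / α) = -(((i : ℝ) + α - 1 + 1) / α) by ring,
    show (-((i : ℝ) + 2 * α - 1 + 1) / α) = -(((i : ℝ) + 2 * α - 1 + 1) / α) by ring,
    hbval, hbval, e1, e2]
  rcases Nat.eq_zero_or_pos i with hi | hi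
  · subst hi
    simp only [Nat.cast_zero, zero_div, zero_add, if_true]
    rw [Real.Gamma_one, show (2 : ℝ) = 1 + 1 by norm_num,
      Real.Gamma_add_one one_ne_zero, Real.Gamma_one, Real.rpow_one,
      show lam ^ ((1 : ℝ) + 1) = lam * lam by
        rw [Real.rpow_add hlpos, Real.rpow_one]]
    field_simp
    ring
  · have hine : i ≠ 0 := hi.ne'
    simp only [hine, if_false]
    have hx : (0 : ℝ) < (i : ℝ) / α := div_pos (by exact_mod_cast hi) hα
    have g1 : Real.Gamma ((i : ℝ) / α + 1) = ((i : ℝ) / α) * Real.Gamma ((i : ℝ) / α) :=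
      Real.Gamma_add_one hx.ne'
    have g2 : Real.Gamma ((i : ℝ) / α + 2) =
        ((i : ℝ) / α + 1) * (((i : ℝ) / α) * Real.Gamma ((i : ℝ) / α)) := by
      rw [show (i : ℝ) / α + 2 = ((i : ℝ) / α + 1) + 1 by ring,
        Real.Gamma_add_one (by positivity), g1]
    have p1 : lam ^ ((i : ℝ) / α + 1) = lam ^ ((i : ℝ) / α) * lam := by
      rw [Real.rpow_add hlpos, Real.rpow_one]
    have p2 : lam ^ ((i : ℝ) / α + 2) = lam ^ ((i : ℝ) / α) * (lam * lam) := by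
      rw [show (i : ℝ) / α + 2 = ((i : ℝ) / α + 1) + 1 by ring, Real.rpow_add hlpos,
        Real.rpow_one, p1]
      ring
    rw [g1, g2, p1, p2]
    have hα0 : α ≠ 0 := hα.ne'
    field_simp
    ring

/-- The r-th central moment of the GRL distribution:
M_r = Σ_{i=0}^{r} C(r,i) (-μ)^(r-i) m_i, where μ is the mean, m_0 = 1 and
m_i = (i λ^(i/α)/(α(λ-1))) (λ + i/α - 1) Γ(i/α) for i ≥ 1. -/
theorem grl_central_moment (lam α : ℝ) (hlam : 2 ≤ lam) (hα : 0 < α) (r : ℕ) (μ : ℝ)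
    (hμ : μ = (lam ^ ((1 : ℝ) / α) / (α * (lam - 1))) * Real.Gamma (1 / α) *
      (lam + 1 / α - 1)) :
    ∫ t in Set.Ioi (0 : ℝ),
      (t - μ) ^ r * ((α / (lam * (lam - 1))) * t ^ (α - 1) * (lam + t ^ α / lam - 2) *
        Real.exp (-(t ^ α / lam)))
      = ∑ i ∈ Finset.range (r + 1),
          (r.choose i : ℝ) * (-μ) ^ (r - i) *
            (if i = 0 then 1 else
              ((i : ℝ) * lam ^ ((i : ℝ) / α) / (α * (lam - 1))) * (lam + (i : ℝ) / α - 1) *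
                Real.Gamma ((i : ℝ) / α)) := by
  have key : ∀ t ∈ Set.Ioi (0 : ℝ),
      (t - μ) ^ r * ((α / (lam * (lam - 1))) * t ^ (α - 1) * (lam + t ^ α / lam - 2) *
        Real.exp (-(t ^ α / lam)))
      = ∑ i ∈ Finset.range (r + 1),
          ((r.choose i : ℝ) * (-μ) ^ (r - i)) *
            (t ^ i * ((α / (lam * (lam - 1))) * t ^ (α - 1) * (lam + t ^ α / lam - 2) *
              Real.exp (-(t ^ α / lam)))) := by
    intro t _
    rw [show t - μ = t + -μ by ring, add_pow, Finset.sum_mul]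
    exact Finset.sum_congr rfl fun i _ => by ring
  rw [setIntegral_congr_fun measurableSet_Ioi key,
    integral_finset_sum _ (fun i _ => ((grl_raw_integrable hlam hα i).const_mul _))]
  refine Finset.sum_congr rfl fun i _ => ?_
  rw [integral_const_mul, grl_raw_moment hlam hα i]
end
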